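/- Let w ∈ S_n and 1 ≤ i ≤ n−1 with w(i) > w(i+1), and suppose i is the first ascent of ws_i (the least j with (ws_i)(j) < (ws_i)(j+1)). Then: (a) C_{w(i+1)}(w) = [i] = {1,…,i}; (b) the multiset I′(w), obtained from I(w) by removing one copy of [i], is i-free, i.e., C ∩ {i, i+1} ≠ {i+1} for every C ∈ I′(w); (c) as multisets of subsets of [n], I(ws_i) = s_i I′(w) ∪ {[i−1]}, where s_i I′(w) is the multiset of the image sets s_i(C) for C ∈ I′(w), and the extra member [i−1] is omitted when i = 1 (since [0] = ∅). -/
import Mathlib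


open MvPolynomial

noncomputable section

namespace BottSamelson

/-- The initial segment `[j] = {1,…,j}` (1-based), i.e. `{a : Fin n | (a:ℕ) < j}` (0-based). -/
def iseg (n j : ℕ) : Finset (Fin n) := Finset.univ.filter fun a => (a : ℕ) < j

/-- The generic upper-triangular matrix of variables: `X i j = x i j` for `i ≤ j`, else `0`. -/
def Xut (n : ℕ) : Fin n → Fin n → MvPolynomial (Fin n × Fin n) ℂ :=
  fun i j => if i ≤ j then MvPolynomial.X (i, j) else 0

/-- The full generic matrix of variables. -/
def Xfull (n : ℕ) : Fin n → Fin n → MvPolynomial (Fin n × Fin n) ℂ :=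
  fun i j => MvPolynomial.X (i, j)

/-- The minor of `M` on rows `R` and columns `C` (defined to be `0` if `R.card ≠ C.card`). -/
def minorOf {n : ℕ} (M : Fin n → Fin n → MvPolynomial (Fin n × Fin n) ℂ)
    (R C : Finset (Fin n)) : MvPolynomial (Fin n × Fin n) ℂ :=
  if h : R.card = C.card then
    Matrix.det (Matrix.of fun a b : Fin C.card =>
      M (R.orderEmbOfFin h a) (C.orderEmbOfFin rfl b))
  else 0

/-- `R ≤ C` componentwise (including the requirement `|R| = |C|`). -/
def compLE {n : ℕ} (R C : Finset (Fin n)) : Prop :=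
  ∃ h : R.card = C.card, ∀ t : Fin C.card, R.orderEmbOfFin h t ≤ C.orderEmbOfFin rfl t

/-- The flagged Weyl module `M^B_{D,m}`: the span of all products of flagged minors
`∏_k ∏_{t < m k} Δ̃_{D k}^{R k t}` with `R k t ≤ D k` componentwise. -/
def flaggedWeyl {n l : ℕ} (D : Fin l → Finset (Fin n)) (m : Fin l → ℕ) :
    Submodule ℂ (MvPolynomial (Fin n × Fin n) ℂ) :=
  Submodule.span ℂ
    { f | ∃ R : (k : Fin l) → Fin (m k) → Finset (Fin n),
        (∀ k t, compLE (R k t) (D k)) ∧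
        f = ∏ k : Fin l, ∏ t : Fin (m k), minorOf (Xut n) (R k t) (D k) }

/-- The (unflagged) Weyl module `M_{D,m}`: the span of all products of minors of the
full generic matrix with arbitrary row sets of the right cardinality. -/
def weylModule {n l : ℕ} (D : Fin l → Finset (Fin n)) (m : Fin l → ℕ) :
    Submodule ℂ (MvPolynomial (Fin n × Fin n) ℂ) :=
  Submodule.span ℂ
    { f | ∃ R : (k : Fin l) → Fin (m k) → Finset (Fin n),
        (∀ k t, (R k t).card = (D k).card) ∧
        f = ∏ k : Fin l, ∏ t : Fin (m k), minorOf (Xfull n) (R k t) (D k) }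

/-- The row-degree weight: the variable `x i j` has weight the `i`-th standard vector. -/
def rowWeight (n : ℕ) : Fin n × Fin n → (Fin n →₀ ℕ) := fun p => Finsupp.single p.1 1

/-- The dual character of a submodule of the polynomial ring, graded by row degree:
`char* M = Σ_μ dim (M_μ) · x^μ`. -/
def dualChar {n : ℕ} (M : Submodule ℂ (MvPolynomial (Fin n × Fin n) ℂ)) :
    MvPolynomial (Fin n) ℤ :=
  ∑ᶠ μ : Fin n →₀ ℕ,
    MvPolynomial.monomial μ
      ((Module.finrank ℂ
        ↥(M ⊓ MvPolynomial.weightedHomogeneousSubmodule ℂ (rowWeight n) μ) : ℤ))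

/-- The `j`-th column of the Rothe diagram of `w`:
`C_j(w) = {i : i < w⁻¹(j), w(i) > j}`. -/
def rotheCol {n : ℕ} (w : Equiv.Perm (Fin n)) (j : Fin n) : Finset (Fin n) :=
  Finset.univ.filter fun i => i < w.symm j ∧ j < w i

/-- The inversion family `I(w)`: the multiset of the nonempty columns of the Rothe
diagram of `w`, counted with multiplicity. -/
def invFamily {n : ℕ} (w : Equiv.Perm (Fin n)) : Multiset (Finset (Fin n)) :=
  (Finset.univ.val.map fun j => rotheCol w j).filter fun C => C ≠ ∅

/-- The number of inversions (the length) of a permutation. -/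
def invCount {n : ℕ} (w : Equiv.Perm (Fin n)) : ℕ :=
  (Finset.univ.filter fun p : Fin n × Fin n => p.1 < p.2 ∧ w p.2 < w p.1).card

/-- The simple transposition exchanging the (0-based) positions `a` and `a+1`
(the identity if out of range). -/
def sNat (n a : ℕ) : Equiv.Perm (Fin n) :=
  if h : a + 1 < n then Equiv.swap ⟨a, Nat.lt_of_succ_lt h⟩ ⟨a + 1, h⟩ else 1

/-- The product `s_{i_1} ⋯ s_{i_k}` of the first `k` letters of the word `ii`
(letters written 0-based). -/
def wordProd (n : ℕ) {l : ℕ} (ii : Fin l → ℕ) (k : ℕ) : Equiv.Perm (Fin n) :=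
  ((List.ofFn fun t => sNat n (ii t)).take k).prod

/-- The `k`-th chamber set `w_k[i_k]` of the word `ii`. -/
def chamberSet (n : ℕ) {l : ℕ} (ii : Fin l → ℕ) (k : Fin l) : Finset (Fin n) :=
  (iseg n (ii k + 1)).image (wordProd n ii ((k : ℕ) + 1))

/-- The full chamber family `D_i^+ = {[1],…,[n]} ∪ {w_k[i_k]}`. -/
def fullChamberFam (n : ℕ) {l : ℕ} (ii : Fin l → ℕ) : Finset (Finset (Fin n)) :=
  (Finset.univ.image fun j : Fin n => iseg n ((j : ℕ) + 1)) ∪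
    Finset.univ.image (chamberSet n ii)

/-- Two subsets are strongly separated. -/
def stronglySep {n : ℕ} (C C' : Finset (Fin n)) : Prop :=
  (∀ a ∈ C \ C', ∀ b ∈ C' \ C, a < b) ∨ ∀ a ∈ C' \ C, ∀ b ∈ C \ C', a < b

/-- The divided difference operator `∂ f = (f - s f)/(x_i - x_j)`, where `s` swaps the
variables `x_i` and `x_j` (defined as the unique polynomial `g` with
`g·(x_i - x_j) = f - s f`). -/
def divDiff {n : ℕ} (i j : Fin n) (f : MvPolynomial (Fin n) ℤ) : MvPolynomial (Fin n) ℤ :=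
  Classical.epsilon fun g =>
    g * (MvPolynomial.X i - MvPolynomial.X j) = f - MvPolynomial.rename (Equiv.swap i j) f

/-- The isobaric divided difference (Demazure operator)
`Λ f = (x_i f - x_j · s f)/(x_i - x_j)`. -/
def demazure {n : ℕ} (i j : Fin n) (f : MvPolynomial (Fin n) ℤ) : MvPolynomial (Fin n) ℤ :=
  Classical.epsilon fun g =>
    g * (MvPolynomial.X i - MvPolynomial.X j) =
      MvPolynomial.X i * f - MvPolynomial.X j * MvPolynomial.rename (Equiv.swap i j) f

/-- The Demazure operator `Λ_a` for the (0-based) simple reflection `s_a`. -/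
def demazureNat (n a : ℕ) (f : MvPolynomial (Fin n) ℤ) : MvPolynomial (Fin n) ℤ :=
  if h : a + 1 < n then demazure ⟨a, Nat.lt_of_succ_lt h⟩ ⟨a + 1, h⟩ f else f

/-- The divided difference `∂_a` for the (0-based) simple reflection `s_a`. -/
def divDiffNat (n a : ℕ) (f : MvPolynomial (Fin n) ℤ) : MvPolynomial (Fin n) ℤ :=
  if h : a + 1 < n then divDiff ⟨a, Nat.lt_of_succ_lt h⟩ ⟨a + 1, h⟩ f else f

/-- The fundamental weight `ϖ_j = x_1 x_2 ⋯ x_j` (`j` counted 1-based). -/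
def varpi (n j : ℕ) : MvPolynomial (Fin n) ℤ := ∏ t ∈ iseg n j, MvPolynomial.X t

/-- The nested Demazure expression `Λ_{a_1}(ϖ_{a_1}^{m_1}·Λ_{a_2}(⋯ Λ_{a_l}(ϖ_{a_l}^{m_l})⋯))`,
letters written 0-based. -/
def demazureWord (n : ℕ) : List (ℕ × ℕ) → MvPolynomial (Fin n) ℤ
  | [] => 1
  | (a, m) :: rest => demazureNat n a (varpi n (a + 1) ^ m * demazureWord n rest)

/-- The successor in `Fin n` (fixing the top element). -/
def next {n : ℕ} (a : Fin n) : Fin n := if h : (a : ℕ) + 1 < n then ⟨a + 1, h⟩ else a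

/-- The set of ascents of a permutation. -/
def ascents {n : ℕ} (w : Equiv.Perm (Fin n)) : Finset (Fin n) :=
  Finset.univ.filter fun a => w a < w (next a)

/-- The staircase monomial `x_1^{n-1} x_2^{n-2} ⋯ x_{n-1}`. -/
def staircase (n : ℕ) : MvPolynomial (Fin n) ℤ :=
  ∏ i : Fin n, MvPolynomial.X i ^ (n - 1 - (i : ℕ))

/-- Auxiliary recursion for the Schubert polynomial along first ascents. -/
def schubertAux (n : ℕ) : ℕ → Equiv.Perm (Fin n) → MvPolynomial (Fin n) ℤ
  | 0, _ => staircase n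
  | fuel + 1, w =>
    if h : (ascents w).Nonempty then
      divDiff ((ascents w).min' h) (next ((ascents w).min' h))
        (schubertAux n fuel (w * Equiv.swap ((ascents w).min' h) (next ((ascents w).min' h))))
    else staircase n

/-- The Schubert polynomial `𝔖(w)`, defined by
`𝔖(w₀) = x_1^{n-1}⋯x_{n-1}` and `𝔖(w) = ∂_i 𝔖(w s_i)` for `i` the first ascent of `w`. -/
def schubert {n : ℕ} (w : Equiv.Perm (Fin n)) : MvPolynomial (Fin n) ℤ :=
  schubertAux n (n * n) w

/-- The general linear group `GL(n, ℂ)`. -/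
abbrev GLn (n : ℕ) := Matrix.GeneralLinearGroup (Fin n) ℂ

/-- Membership in the Borel subgroup `B` of upper-triangular matrices. -/
def upperTri {n : ℕ} (g : GLn n) : Prop :=
  ∀ i j : Fin n, j < i → (g : Matrix (Fin n) (Fin n) ℂ) i j = 0

/-- The coordinate subspace `E_C = span{e_j : j ∈ C} ⊆ ℂⁿ`. -/
def coordSub {n : ℕ} (C : Finset (Fin n)) : Submodule ℂ (Fin n → ℂ) :=
  Submodule.span ℂ ((fun j => (Pi.single j 1 : Fin n → ℂ)) '' (C : Set (Fin n)))

/-- The image subspace `A·V` of a subspace under a matrix. -/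
def mapSub {n : ℕ} (A : Matrix (Fin n) (Fin n) ℂ) (V : Submodule ℂ (Fin n → ℂ)) :
    Submodule ℂ (Fin n → ℂ) :=
  Submodule.map (Matrix.toLin' A) V

/-- Lexicographic order on subsets: the smallest element of the symmetric difference
belongs to `C`. -/
def lexLT {n : ℕ} (C C' : Finset (Fin n)) : Prop :=
  ∃ a : Fin n, IsLeast (↑(C \ C' ∪ C' \ C) : Set (Fin n)) a ∧ a ∈ C

private lemma swap_val' {n : ℕ} {A B : Fin n} (hAB : (A : ℕ) ≠ (B : ℕ)) (x : Fin n) :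
    ((Equiv.swap A B x : Fin n) : ℕ) =
      if (x : ℕ) = (A : ℕ) then (B : ℕ) else if (x : ℕ) = (B : ℕ) then (A : ℕ) else (x : ℕ) := by
  rcases eq_or_ne x A with rfl | hxA
  · rw [Equiv.swap_apply_left, if_pos rfl]
  · rcases eq_or_ne x B with rfl | hxB
    · rw [Equiv.swap_apply_right, if_neg hAB.symm, if_pos rfl]
    · rw [Equiv.swap_apply_of_ne_of_ne hxA hxB,
        if_neg (fun h => hxA (Fin.ext h)), if_neg (fun h => hxB (Fin.ext h))]

set_option maxHeartbeats 1600000 in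
/-- Let `w ∈ S_n`, `w(i) > w(i+1)`, and let `i` be the first ascent of `w s_i`
(`a` is the 0-based index, `i = a+1` 1-based).  Then:
(a) `C_{w(i+1)}(w) = [i]`;
(b) removing one copy of `[i]` from `I(w)` leaves an `i`-free multiset;
(c) `I(w s_i) = s_i I′(w) ∪ {[i-1]}` (the last member omitted when `i = 1`). -/
theorem invFamily_first_ascent_recursion
    (n a : ℕ) (ha : a + 1 < n) (w : Equiv.Perm (Fin n))
    (hdes : w ⟨a + 1, ha⟩ < w ⟨a, Nat.lt_of_succ_lt ha⟩)
    (hfirst : IsLeast {j : Fin n |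
        (w * Equiv.swap (⟨a, Nat.lt_of_succ_lt ha⟩ : Fin n) (⟨a + 1, ha⟩ : Fin n)) j <
          (w * Equiv.swap (⟨a, Nat.lt_of_succ_lt ha⟩ : Fin n) (⟨a + 1, ha⟩ : Fin n)) (next j)}
      ⟨a, Nat.lt_of_succ_lt ha⟩) :
    rotheCol w (w ⟨a + 1, ha⟩) = iseg n (a + 1)
    ∧ (∀ C ∈ (invFamily w).erase (iseg n (a + 1)),
        C ∩ ({⟨a, Nat.lt_of_succ_lt ha⟩, ⟨a + 1, ha⟩} : Finset (Fin n))
          ≠ ({⟨a + 1, ha⟩} : Finset (Fin n)))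
    ∧ invFamily (w * Equiv.swap (⟨a, Nat.lt_of_succ_lt ha⟩ : Fin n) (⟨a + 1, ha⟩ : Fin n))
        = Multiset.map
            (Finset.image (⇑(Equiv.swap (⟨a, Nat.lt_of_succ_lt ha⟩ : Fin n) (⟨a + 1, ha⟩ : Fin n))))
            ((invFamily w).erase (iseg n (a + 1)))
          + (if a = 0 then (0 : Multiset (Finset (Fin n))) else {iseg n a}) := by
  set A : Fin n := ⟨a, Nat.lt_of_succ_lt ha⟩ with hA
  set B : Fin n := ⟨a + 1, ha⟩ with hB
  obtain ⟨s, hs⟩ : ∃ s' : Equiv.Perm (Fin n), s' = Equiv.swap A B := ⟨_, rfl⟩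
  rw [← hs] at hfirst ⊢
  obtain ⟨v, hv⟩ : ∃ v' : Equiv.Perm (Fin n), v' = w * s := ⟨_, rfl⟩
  rw [← hv] at hfirst ⊢
  have hAv : (A : ℕ) = a := rfl
  have hBv : (B : ℕ) = a + 1 := rfl
  have hABv : (A : ℕ) ≠ (B : ℕ) := by omega
  have hAB : A ≠ B := fun h => hABv (congrArg Fin.val h)
  have hsA : s A = B := by rw [hs]; exact Equiv.swap_apply_left A B
  have hsB : s B = A := by rw [hs]; exact Equiv.swap_apply_right A B
  have hss : ∀ x, s (s x) = x := by intro x; rw [hs]; exact Equiv.swap_apply_self A B x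
  have hvdef : ∀ x, v x = w (s x) := by intro x; rw [hv]; rfl
  have hvsymm : ∀ y, v.symm y = s (w.symm y) := by
    intro y
    rw [Equiv.symm_apply_eq, hvdef, hss, Equiv.apply_symm_apply]
  -- the chain v(0) > v(1) > ... > v(a)
  have hstep : ∀ j : ℕ, ∀ _hj : j < a, ∀ (h1 : j + 1 < n) (h2 : j < n),
      v ⟨j + 1, h1⟩ < v ⟨j, h2⟩ := by
    intro j hj hjn1 hjn
    have hnext : next (⟨j, hjn⟩ : Fin n) = ⟨j + 1, hjn1⟩ := by
      unfold next
      rw [dif_pos]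
    have hnot : ¬ (v ⟨j, hjn⟩ < v (next ⟨j, hjn⟩)) := by
      intro hlt
      have hle := hfirst.2 hlt
      rw [Fin.le_def] at hle
      simp only [hAv] at hle
      omega
    rw [hnext] at hnot
    rcases lt_or_eq_of_le (not_lt.mp hnot) with h | h
    · exact h
    · exfalso
      have := v.injective h
      rw [Fin.ext_iff] at this
      simp at this
  have hchain : ∀ d j : ℕ, ∀ _hj : j + d = a, ∀ h : j < n, v A ≤ v ⟨j, h⟩ := by
    intro d
    induction d with
    | zero =>
      intro j hj h
      have hj' : (⟨j, h⟩ : Fin n) = A := Fin.ext (by simpa using hj)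
      rw [hj']
    | succ d ih =>
      intro j hj h
      have hj1 : j + 1 < n := by omega
      exact le_trans (ih (j + 1) (by omega) hj1) (le_of_lt (hstep j (by omega) hj1 h))
  have hdom : ∀ i : Fin n, (i : ℕ) < a → w B < w i := by
    intro i hi
    have hiA : i ≠ A := fun h => by rw [h, hAv] at hi; omega
    have hiB : i ≠ B := fun h => by rw [h] at hi; simp [hBv] at hi
    have hwi : v i = w i := by rw [hvdef, hs, Equiv.swap_apply_of_ne_of_ne hiA hiB]
    have hvA : v A = w B := by rw [hvdef, hsA]
    have hi1 : (i : ℕ) + 1 < n := by omega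
    have hin : (i : ℕ) < n := i.isLt
    calc w B = v A := hvA.symm
      _ ≤ v ⟨(i : ℕ) + 1, hi1⟩ := hchain (a - ((i : ℕ) + 1)) _ (by omega) hi1
      _ < v ⟨(i : ℕ), hin⟩ := hstep (i : ℕ) hi hi1 hin
      _ = w i := by rw [Fin.eta, hwi]
  -- part (a)
  have colA : rotheCol w (w B) = iseg n (a + 1) := by
    ext i
    simp only [rotheCol, iseg, Finset.mem_filter, Finset.mem_univ, true_and,
      Equiv.symm_apply_apply]
    constructor
    · rintro ⟨h1, -⟩
      rw [Fin.lt_def, hBv] at h1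
      exact h1
    · intro h1
      refine ⟨by rw [Fin.lt_def, hBv]; exact h1, ?_⟩
      rcases Nat.lt_or_ge (i : ℕ) a with h | h
      · exact hdom i h
      · have hiA : i = A := Fin.ext (by rw [hAv]; omega)
        rw [hiA]
        exact hdes
  -- part (b)
  have partb : ∀ C ∈ (invFamily w).erase (iseg n (a + 1)),
      C ∩ ({A, B} : Finset (Fin n)) ≠ ({B} : Finset (Fin n)) := by
    intro C hC heq
    have hC' := Multiset.mem_of_mem_erase hC
    simp only [invFamily, Multiset.mem_filter, Multiset.mem_map] at hC'
    obtain ⟨⟨k, -, rfl⟩, -⟩ := hC'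
    have hBC : B ∈ rotheCol w k := by
      have hmem : B ∈ rotheCol w k ∩ ({A, B} : Finset (Fin n)) := by
        rw [heq]; exact Finset.mem_singleton_self B
      exact (Finset.mem_inter.mp hmem).1
    have hAC : A ∉ rotheCol w k := by
      intro hAC
      have hmem : A ∈ rotheCol w k ∩ ({A, B} : Finset (Fin n)) :=
        Finset.mem_inter.mpr ⟨hAC, by simp⟩
      rw [heq, Finset.mem_singleton] at hmem
      exact hAB hmem
    simp only [rotheCol, Finset.mem_filter, Finset.mem_univ, true_and] at hBC hAC
    push_neg at hAC
    have h1 : A < w.symm k :=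
      lt_trans (show A < B by rw [Fin.lt_def, hAv, hBv]; omega) hBC.1
    exact absurd (lt_trans hBC.2 hdes) (not_lt.mpr (hAC h1))
  -- columns of v
  have colvB : rotheCol v (w B) = iseg n a := by
    ext i
    simp only [rotheCol, iseg, Finset.mem_filter, Finset.mem_univ, true_and]
    rw [hvsymm, Equiv.symm_apply_apply, hsB]
    constructor
    · rintro ⟨h1, -⟩
      rw [Fin.lt_def, hAv] at h1
      exact h1
    · intro h1
      have hiA : i ≠ A := fun h => by rw [h, hAv] at h1; omega
      have hiB : i ≠ B := fun h => by rw [h] at h1; simp [hBv] at h1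
      refine ⟨by rw [Fin.lt_def, hAv]; exact h1, ?_⟩
      rw [hvdef, hs, Equiv.swap_apply_of_ne_of_ne hiA hiB]
      exact hdom i h1
  have colv : ∀ k : Fin n, k ≠ w B → rotheCol v k = (rotheCol w k).image s := by
    intro k hk
    ext i
    have hmem : i ∈ (rotheCol w k).image s ↔ s i ∈ rotheCol w k := by
      constructor
      · intro h
        obtain ⟨b, hb, rfl⟩ := Finset.mem_image.mp h
        rwa [hss]
      · intro h
        exact Finset.mem_image.mpr ⟨s i, h, hss i⟩
    rw [hmem]
    simp only [rotheCol, Finset.mem_filter, Finset.mem_univ, true_and]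
    rw [hvsymm, hvdef]
    set p := w.symm k with hp
    have hkp : k = w p := by rw [hp, Equiv.apply_symm_apply]
    have hpB : (p : ℕ) ≠ a + 1 := by
      intro hpa
      exact hk (by rw [hkp, show p = B from Fin.ext hpa])
    by_cases hsp : (p : ℕ) = a ∧ (i : ℕ) = a
    · obtain ⟨hpa, hia⟩ := hsp
      have hip : i = A := Fin.ext hia
      have hpp : p = A := Fin.ext hpa
      constructor <;>
        · rintro ⟨-, h2⟩
          exfalso
          rw [hip, hsA, hkp, hpp] at h2
          exact absurd h2 (not_lt.mpr (le_of_lt hdes))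
    · have key : i < s p ↔ s i < p := by
        rw [Fin.lt_def, Fin.lt_def, hs, swap_val' hABv, swap_val' hABv, hAv, hBv]
        split_ifs <;> omega
      rw [key]
  -- multiset bookkeeping
  have hne1 : iseg n (a + 1) ≠ ∅ :=
    Finset.ne_empty_of_mem (show (⟨0, by omega⟩ : Fin n) ∈ iseg n (a + 1) by
      simp [iseg])
  have hcons : (Finset.univ.val : Multiset (Fin n)) =
      (w B) ::ₘ (Finset.univ.val.erase (w B)) :=
    (Multiset.cons_erase (by simp : w B ∈ (Finset.univ.val : Multiset (Fin n)))).symm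
  have hIw : invFamily w =
      iseg n (a + 1) ::ₘ
        ((Finset.univ.val.erase (w B)).map (fun j => rotheCol w j)).filter
          (fun C => C ≠ ∅) := by
    rw [invFamily, hcons, Multiset.map_cons, colA,
      Multiset.filter_cons_of_pos (p := fun C => C ≠ ∅) _ hne1, Multiset.erase_cons_head]
  have hErase : (invFamily w).erase (iseg n (a + 1)) =
      ((Finset.univ.val.erase (w B)).map (fun j => rotheCol w j)).filter
        (fun C => C ≠ ∅) := by
    rw [hIw, Multiset.erase_cons_head]
  have hmapcol : (Finset.univ.val.erase (w B)).map (fun j => rotheCol v j) =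
      ((Finset.univ.val.erase (w B)).map (fun j => rotheCol w j)).map
        (Finset.image s) := by
    rw [Multiset.map_map]
    refine Multiset.map_congr rfl ?_
    intro k hk
    exact colv k ((Finset.univ.nodup.mem_erase_iff.mp hk).1)
  have hfilters :
      Multiset.filter (fun C => C ≠ ∅)
        ((Finset.univ.val.erase (w B)).map (fun j => rotheCol v j)) =
      Multiset.map (Finset.image s)
        (((Finset.univ.val.erase (w B)).map (fun j => rotheCol w j)).filter
          (fun C => C ≠ ∅)) := by
    rw [hmapcol, Multiset.filter_map]
    congr 1
    refine Multiset.filter_congr ?_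
    intro C _
    simp [Function.comp, Finset.image_eq_empty]
  have hIv : invFamily v =
      Multiset.filter (fun C => C ≠ ∅)
        ((iseg n a) ::ₘ (Finset.univ.val.erase (w B)).map (fun j => rotheCol v j)) := by
    rw [invFamily, hcons, Multiset.map_cons, colvB, Multiset.erase_cons_head]
  refine ⟨colA, partb, ?_⟩
  rw [hErase, hIv]
  rcases Nat.eq_zero_or_pos a with rfl | hapos
  · have h0 : iseg n 0 = ∅ := by
      ext x; simp [iseg]
    rw [if_pos rfl, add_zero, Multiset.filter_cons_of_neg (p := fun C => C ≠ ∅) _ (by simp [h0])]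
    exact hfilters
  · have hne2 : iseg n a ≠ ∅ :=
      Finset.ne_empty_of_mem (show (⟨0, by omega⟩ : Fin n) ∈ iseg n a by
        simp [iseg]; omega)
    rw [if_neg (by omega), Multiset.filter_cons_of_pos (p := fun C => C ≠ ∅) _ hne2, hfilters,
      add_comm, Multiset.singleton_add]

end BottSamelson
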